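/- Let T be a finite rooted tree with a friendly labeling function L : G → 𝓛, and let e be an interior edge of T. If λ⁻ is a consistent labeling of T_{e,−} and λ⁺ is a consistent labeling of T_{e,+} with λ⁻(e) = λ⁺(e), then the labeling λ of T whose restriction to the edges of T_{e,−} equals λ⁻ and whose restriction to the edges of T_{e,+} equals λ⁺ is a consistent labeling of T, i.e., λ ∈ im(L^T). -/

import Mathlib

open MvPolynomial

attribute [local instance] Classical.propDecidable

/-- The set `Z_m ⊆ G^m` of tuples with `g_1 + ⋯ + g_{m-1} = g_m`. -/
def ZSet (G : Type) [AddCommGroup G] (m : ℕ) : Set (Fin m → G) :=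
  {g | (∑ i ∈ Finset.univ.filter fun i : Fin m => (i : ℕ) < m - 1, g i) =
       ∑ i ∈ Finset.univ.filter fun i : Fin m => ¬ (i : ℕ) < m - 1, g i}

/-- A labeling function `L : G → 𝓛` is `m`-friendly if for every tuple in `Z_m`, every
value with the same label at a coordinate can be realized at that coordinate by another
tuple in `Z_m` with the same label vector. -/
def IsMFriendly {G 𝓛 : Type} [AddCommGroup G] (L : G → 𝓛) (m : ℕ) : Prop :=
  ∀ g ∈ ZSet G m, ∀ i : Fin m, ∀ h : G, L h = L (g i) →
    ∃ g' ∈ ZSet G m, (∀ j, L (g' j) = L (g j)) ∧ g' i = h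

/-- A labeling function is friendly if it is `m`-friendly for all `m ≥ 3`. -/
def Friendly {G 𝓛 : Type} [AddCommGroup G] (L : G → 𝓛) : Prop :=
  ∀ m, 3 ≤ m → IsMFriendly L m

/-- A finite rooted tree, given by a parent function on a finite vertex set. -/
structure PhyloTree where
  V : Type
  fintypeV : Fintype V
  root : V
  parent : V → V
  parent_root : parent root = root
  reaches_root : ∀ v, ∃ n : ℕ, parent^[n] v = root

attribute [instance] PhyloTree.fintypeV

namespace PhyloTree

variable (T : PhyloTree)

/-- A vertex is a leaf if it has no children. -/
def IsLeaf (v : T.V) : Prop := ∀ u, T.parent u = v → u = v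

/-- The type of leaves of `T`. -/
def Leaf : Type := {v : T.V // T.IsLeaf v}

noncomputable instance : Fintype T.Leaf :=
  have : DecidablePred T.IsLeaf := Classical.decPred _
  Subtype.fintype _

/-- `u` is a (weak) descendant of `v`. -/
def Desc (u v : T.V) : Prop := ∃ n : ℕ, T.parent^[n] u = v

/-- The edges of `T` are indexed by its vertices: a vertex `v` indexes the edge from
`parent v` to `v`, and the root indexes the extra pendant root edge `e_r`.
`leavesBelow v` is the set `Λ(e)` of leaves below the edge indexed by `v`. -/
noncomputable def leavesBelow (v : T.V) : Finset T.Leaf :=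
  Finset.univ.filter fun l => T.Desc l.1 v

/-- An edge is interior if its lower endpoint is neither a leaf nor the root
(the latter excluding the pendant root edge). -/
def InteriorEdge (e : T.V) : Prop := ¬ T.IsLeaf e ∧ e ≠ T.root

/-- The edge set of the subtree `T_{e,-}`: the edge `e` together with all edges below it. -/
def Eminus (e : T.V) : Set T.V := {e' | T.Desc e' e}

/-- The edge set of the subtree `T_{e,+}`: the edge `e` together with all edges not in `T_{e,-}`. -/
def Eplus (e : T.V) : Set T.V := {e' | e' = e ∨ ¬ T.Desc e' e}

theorem mem_Eminus_self (e : T.V) : e ∈ T.Eminus e := ⟨0, rfl⟩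

theorem mem_Eplus_self (e : T.V) : e ∈ T.Eplus e := Or.inl rfl

variable {G 𝓛 : Type} [AddCommGroup G] [Fintype G]

/-- `g(e)`: the sum of the group elements at the leaves below the edge `e`. -/
noncomputable def gsum (g : T.Leaf → G) (e : T.V) : G := ∑ l ∈ T.leavesBelow e, g l

/-- The consistent labelings of the subtree with edge set `S`. -/
def consLab (L : G → 𝓛) (S : Set T.V) : Set (↥S → 𝓛) :=
  Set.range fun g : T.Leaf → G => fun e' : ↥S => L (T.gsum g e'.1)

/-- The consistent labelings of the whole tree `T`, i.e. the image of `L^T`. -/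
def consLabFull (L : G → 𝓛) : Set (T.V → 𝓛) :=
  Set.range fun g : T.Leaf → G => fun e : T.V => L (T.gsum g e)

/-- The toric ideal of the subtree with edge set `S` (in Fourier coordinates `q_λ`,
`λ` a consistent labeling): the kernel of the monomial map `q_λ ↦ ∏_e a^{(e)}_{λ(e)}`. -/
noncomputable def toricIdeal (L : G → 𝓛) (S : Set T.V) :
    Ideal (MvPolynomial ↥(T.consLab L S) ℂ) :=
  RingHom.ker (aeval (R := ℂ)
    fun μ : ↥(T.consLab L S) => ∏ e' : ↥S, (X (e', μ.1 e') : MvPolynomial (↥S × 𝓛) ℂ))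

/-- The toric ideal `I_{T,L}` of the tree `T`. -/
noncomputable def toricIdealFull (L : G → 𝓛) :
    Ideal (MvPolynomial ↥(T.consLabFull L) ℂ) :=
  RingHom.ker (aeval (R := ℂ)
    fun μ : ↥(T.consLabFull L) => ∏ e : T.V, (X (e, μ.1 e) : MvPolynomial (T.V × 𝓛) ℂ))

/-- Glue a labeling of `T_{e,-}` and a labeling of `T_{e,+}` into a labeling of `T`. -/
noncomputable def glue (e : T.V) (μ : ↥(T.Eminus e) → 𝓛) (ν : ↥(T.Eplus e) → 𝓛) :
    T.V → 𝓛 :=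
  fun e' => if h : T.Desc e' e then μ ⟨e', h⟩ else ν ⟨e', Or.inr h⟩

/-- `mix e λ₁ λ₂` agrees with `λ₁` on `T_{e,-}` and with `λ₂` on the rest of `T`. -/
noncomputable def mix (e : T.V) (f g : T.V → 𝓛) : T.V → 𝓛 :=
  fun e' => if T.Desc e' e then f e' else g e'

end PhyloTree

section Aux

open PhyloTree Finset

variable (T : PhyloTree)

namespace PhyloGlueAux

theorem desc_refl (v : T.V) : T.Desc v v := ⟨0, rfl⟩

theorem desc_trans {a b c : T.V} (h1 : T.Desc a b) (h2 : T.Desc b c) : T.Desc a c := by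
  obtain ⟨n, rfl⟩ := h1; obtain ⟨m, rfl⟩ := h2
  exact ⟨m + n, (Function.iterate_add_apply _ m n a)⟩

theorem iterate_root (n : ℕ) : T.parent^[n] T.root = T.root :=
  Function.iterate_fixed T.parent_root n

theorem eq_root_of_iterate {u : T.V} {k : ℕ} (hk : 0 < k) (h : T.parent^[k] u = u) :
    u = T.root := by
  obtain ⟨N, hN⟩ := T.reaches_root u
  have hq : ∀ q : ℕ, T.parent^[k * q] u = u := by
    intro q
    induction q with
    | zero => simp
    | succ q ih =>
      have : k * (q + 1) = k * q + k := by ring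
      rw [this, Function.iterate_add_apply, h, ih]
  have hge : N ≤ k * N := Nat.le_mul_of_pos_left N hk
  have : T.parent^[k * N] u = T.root := by
    have : k * N = (k * N - N) + N := by omega
    rw [this, Function.iterate_add_apply, hN, iterate_root]
  rw [hq N] at this
  exact this

theorem desc_antisymm {u v : T.V} (h1 : T.Desc u v) (h2 : T.Desc v u) : u = v := by
  obtain ⟨n, hn⟩ := h1; obtain ⟨m, hm⟩ := h2
  rcases Nat.eq_zero_or_pos (m + n) with h | h
  · have : n = 0 := by omega
    simpa [this] using hn
  · have hu : T.parent^[m + n] u = u := by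
      rw [Function.iterate_add_apply, hn, hm]
    have hur : u = T.root := eq_root_of_iterate T h hu
    subst hur
    rw [iterate_root] at hn
    exact hn

theorem desc_of_leaf {u v : T.V} (hv : T.IsLeaf v) (h : T.Desc u v) : u = v := by
  obtain ⟨n, hn⟩ := h
  induction n generalizing u with
  | zero => exact hn
  | succ n ih =>
    rw [Function.iterate_succ_apply] at hn
    have := ih hn
    exact hv u this

theorem desc_comparable {l a b : T.V} (ha : T.Desc l a) (hb : T.Desc l b) :
    T.Desc a b ∨ T.Desc b a := by
  obtain ⟨n, hn⟩ := ha; obtain ⟨m, hm⟩ := hb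
  rcases le_total n m with h | h
  · left
    refine ⟨m - n, ?_⟩
    rw [← hn, ← Function.iterate_add_apply, ← hm]
    congr 1; omega
  · right
    refine ⟨n - m, ?_⟩
    rw [← hm, ← Function.iterate_add_apply, ← hn]
    congr 1; omega

/-- The set of (weak) descendants of `v`. -/
noncomputable def descSet (v : T.V) : Finset T.V :=
  Finset.univ.filter (T.Desc · v)

/-- The children of `v`. -/
noncomputable def children (v : T.V) : Finset T.V :=
  Finset.univ.filter fun c => T.parent c = v ∧ c ≠ v

theorem mem_children {c v : T.V} : c ∈ children T v ↔ T.parent c = v ∧ c ≠ v := by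
  simp [children]

theorem desc_of_child {c v : T.V} (hc : c ∈ children T v) : T.Desc c v :=
  ⟨1, by simpa using (mem_children T).mp hc |>.1⟩

theorem child_of_desc {u v : T.V} (hne : u ≠ v) (h : T.Desc u v) :
    ∃ c ∈ children T v, T.Desc u c := by
  have hex : ∃ n : ℕ, T.parent^[n] u = v := h
  classical
  let n := Nat.find hex
  have hn : T.parent^[n] u = v := Nat.find_spec hex
  have hpos : 0 < n := by
    rcases Nat.eq_zero_or_pos n with h0 | h0
    · exfalso; apply hne; rw [← hn, h0]; rfl
    · exact h0
  refine ⟨T.parent^[n - 1] u, ?_, ⟨n - 1, rfl⟩⟩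
  rw [mem_children]
  constructor
  · have h1 : T.parent^[n - 1 + 1] u = v := by
      rw [show n - 1 + 1 = n by omega]; exact hn
    rw [Function.iterate_succ_apply'] at h1
    exact h1
  · intro hc
    have : n - 1 < n := by omega
    exact absurd hc (Nat.find_min hex this)

theorem descSet_ssubset {c v : T.V} (hc : c ∈ children T v) :
    descSet T c ⊂ descSet T v := by
  rw [mem_children] at hc
  constructor
  · intro u hu
    simp only [descSet, mem_filter, mem_univ, true_and] at hu ⊢
    exact desc_trans T hu ⟨1, by simpa using hc.1⟩
  · intro hsub
    have hv : v ∈ descSet T v := by simp [descSet, desc_refl]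
    have := hsub hv
    simp only [descSet, mem_filter, mem_univ, true_and] at this
    exact hc.2 (desc_antisymm T ⟨1, by simpa using hc.1⟩ this)

theorem children_nonempty {v : T.V} (hv : ¬ T.IsLeaf v) : (children T v).Nonempty := by
  simp only [PhyloTree.IsLeaf, not_forall] at hv
  obtain ⟨u, hu, hne⟩ := hv
  exact ⟨u, (mem_children T).mpr ⟨hu, hne⟩⟩

theorem child_eq_of_desc {c c' u v : T.V} (hc : c ∈ children T v) (hc' : c' ∈ children T v)
    (h : T.Desc u c) (h' : T.Desc u c') : c = c' := by
  rw [mem_children] at hc hc'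
  rcases desc_comparable T h h' with hcc | hcc
  · obtain ⟨k, hk⟩ := hcc
    rcases Nat.eq_zero_or_pos k with h0 | h0
    · rw [h0] at hk; exact hk
    · exfalso
      apply hc'.2
      have : T.parent^[k] c = T.parent^[k - 1] v := by
        rw [← hc.1, ← Function.iterate_succ_apply]
        congr 1; omega
      have hvd : T.Desc v c' := ⟨k - 1, by rw [← this, hk]⟩
      exact (desc_antisymm T ⟨1, by simpa using hc'.1⟩ hvd)
  · obtain ⟨k, hk⟩ := hcc
    rcases Nat.eq_zero_or_pos k with h0 | h0
    · rw [h0] at hk; exact hk.symm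
    · exfalso
      apply hc.2
      have : T.parent^[k] c' = T.parent^[k - 1] v := by
        rw [← hc'.1, ← Function.iterate_succ_apply]
        congr 1; omega
      have hvd : T.Desc v c := ⟨k - 1, by rw [← this, hk]⟩
      exact (desc_antisymm T ⟨1, by simpa using hc.1⟩ hvd)

theorem mem_leavesBelow {l : T.Leaf} {v : T.V} :
    l ∈ T.leavesBelow v ↔ T.Desc l.1 v := by
  simp [PhyloTree.leavesBelow]

theorem leavesBelow_leaf {v : T.V} (hv : T.IsLeaf v) :
    T.leavesBelow v = {⟨v, hv⟩} := by
  ext l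
  rw [mem_leavesBelow]; refine Iff.trans ?_ Finset.mem_singleton.symm
  constructor
  · intro h
    exact Subtype.ext (desc_of_leaf T hv h)
  · rintro rfl
    exact desc_refl T v

theorem leavesBelow_eq_biUnion {v : T.V} (hv : ¬ T.IsLeaf v) :
    T.leavesBelow v = (children T v).biUnion fun c => T.leavesBelow c := by
  ext l
  simp only [Finset.mem_biUnion, mem_leavesBelow]
  constructor
  · intro h
    have hne : l.1 ≠ v := by
      rintro rfl
      exact hv l.2
    obtain ⟨c, hc, hlc⟩ := child_of_desc T hne h
    exact ⟨c, hc, hlc⟩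
  · rintro ⟨c, hc, hlc⟩
    exact desc_trans T hlc (desc_of_child T hc)

theorem gsum_eq_sum_children {G : Type} [AddCommGroup G] (g : T.Leaf → G) {v : T.V}
    (hv : ¬ T.IsLeaf v) :
    T.gsum g v = ∑ c ∈ children T v, T.gsum g c := by
  have hdisj : (↑(children T v) : Set T.V).PairwiseDisjoint fun c => T.leavesBelow c := by
    intro c hc c' hc' hne
    simp only [Function.onFun]
    apply Finset.disjoint_left.mpr
    intro l hl hl'
    rw [mem_leavesBelow] at hl hl'
    exact hne (child_eq_of_desc T hc hc' hl hl')
  rw [PhyloTree.gsum, leavesBelow_eq_biUnion T hv, Finset.sum_biUnion hdisj]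
  rfl

theorem gsum_congr {G : Type} [AddCommGroup G] {g g' : T.Leaf → G} {v : T.V}
    (h : ∀ l : T.Leaf, T.Desc l.1 v → g l = g' l) : T.gsum g v = T.gsum g' v := by
  apply Finset.sum_congr rfl
  intro l hl
  exact h l (mem_leavesBelow T |>.mp hl)

theorem zset_iff {G : Type} [AddCommGroup G] {k : ℕ} (f : Fin (k + 1) → G) :
    f ∈ ZSet G (k + 1) ↔ ∑ j : Fin k, f j.castSucc = f (Fin.last k) := by
  have hfilter : (Finset.univ.filter fun i : Fin (k + 1) => ¬ (i : ℕ) < (k + 1) - 1) =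
      {Fin.last k} := by
    ext i
    have hi := i.isLt
    simp only [Finset.mem_filter, Finset.mem_univ, true_and, Finset.mem_singleton,
      Fin.ext_iff, Fin.val_last, not_lt]
    omega
  have hsplit := Finset.sum_filter_add_sum_filter_not Finset.univ
    (fun i : Fin (k + 1) => (i : ℕ) < (k + 1) - 1) f
  rw [hfilter, Finset.sum_singleton] at hsplit
  have huniv : ∑ i : Fin (k + 1), f i = ∑ j : Fin k, f j.castSucc + f (Fin.last k) :=
    Fin.sum_univ_castSucc f
  have hP : ∑ i ∈ Finset.univ.filter (fun i : Fin (k + 1) => (i : ℕ) < (k + 1) - 1), f i =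
      ∑ j : Fin k, f j.castSucc := by
    have := hsplit.trans huniv
    exact add_right_cancel this
  simp only [ZSet, Set.mem_setOf_eq, hfilter, Finset.sum_singleton, hP]

theorem exists_new_child_sums {G 𝓛 : Type} [AddCommGroup G] (L : G → 𝓛) (hL : Friendly L)
    {v : T.V} (g : T.Leaf → G) (hv : ¬ T.IsLeaf v) (hk : 2 ≤ (children T v).card)
    (h : G) (hh : L h = L (T.gsum g v)) :
    ∃ hc : T.V → G, (∀ c ∈ children T v, L (hc c) = L (T.gsum g c)) ∧
      ∑ c ∈ children T v, hc c = h := by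
  classical
  set k := (children T v).card with hkdef
  let σ : {x // x ∈ children T v} ≃ Fin k := (children T v).equivFin
  let f : Fin (k + 1) → G := Fin.snoc (fun j => T.gsum g (σ.symm j).1) (T.gsum g v)
  have hcast : ∀ j : Fin k, f j.castSucc = T.gsum g (σ.symm j).1 := by
    intro j; simp [f, Fin.snoc_castSucc]
  have hlastf : f (Fin.last k) = T.gsum g v := by simp [f, Fin.snoc_last]
  have hsum_children : ∑ j : Fin k, T.gsum g (σ.symm j).1 = ∑ c ∈ children T v, T.gsum g c := by
    rw [← Finset.sum_coe_sort (children T v) (fun c => T.gsum g c)]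
    exact Equiv.sum_comp σ.symm (fun c => T.gsum g c.1)
  have hf : f ∈ ZSet G (k + 1) := by
    rw [zset_iff]
    rw [hlastf]
    calc ∑ j : Fin k, f j.castSucc = ∑ j : Fin k, T.gsum g (σ.symm j).1 :=
          Finset.sum_congr rfl fun j _ => hcast j
      _ = ∑ c ∈ children T v, T.gsum g c := hsum_children
      _ = T.gsum g v := (gsum_eq_sum_children T g hv).symm
  obtain ⟨f', hf', hlab, hlast⟩ := hL (k + 1) (by omega) f hf (Fin.last k) h
    (by rw [hlastf]; exact hh)
  refine ⟨fun c => if hcm : c ∈ children T v then f' ((σ ⟨c, hcm⟩).castSucc) else 0, ?_, ?_⟩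
  · intro c hcm
    simp only [dif_pos hcm]
    rw [hlab, hcast, Equiv.symm_apply_apply]
  · have : ∀ c : {x // x ∈ children T v},
        (if hcm : c.1 ∈ children T v then f' ((σ ⟨c.1, hcm⟩).castSucc) else 0) =
          f' ((σ c).castSucc) := by
      intro c; rw [dif_pos c.2]
    rw [← Finset.sum_coe_sort (children T v)]
    rw [Finset.sum_congr rfl fun c _ => this c]
    have : ∑ c : {x // x ∈ children T v}, f' ((σ c).castSucc) =
        ∑ j : Fin k, f' j.castSucc := by
      exact Fintype.sum_equiv σ _ _ fun c => rfl
    rw [this, (zset_iff f').mp hf', hlast]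

/-- The key exchange lemma: the value of the subtree sum at `v` can be replaced by any
value with the same label, keeping all labels of edges below `v` and all leaves outside
the subtree below `v` unchanged. -/
theorem exchange {G 𝓛 : Type} [AddCommGroup G] (L : G → 𝓛) (hL : Friendly L) :
    ∀ n : ℕ, ∀ v : T.V, (descSet T v).card ≤ n → ∀ g : T.Leaf → G, ∀ h : G,
      L h = L (T.gsum g v) →
      ∃ g' : T.Leaf → G, (∀ l : T.Leaf, ¬ T.Desc l.1 v → g' l = g l) ∧
        T.gsum g' v = h ∧ ∀ e' : T.V, T.Desc e' v → L (T.gsum g' e') = L (T.gsum g e') := by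
  intro n
  induction n with
  | zero =>
    intro v hcard g h hh
    exfalso
    have hv : v ∈ descSet T v := by simp [descSet, desc_refl]
    have := Finset.card_pos.mpr ⟨v, hv⟩
    omega
  | succ n IH =>
    intro v hcard g h hh
    classical
    by_cases hv : T.IsLeaf v
    · -- leaf case: just update the single leaf below `v`
      have hg'v : T.gsum (Function.update g ⟨v, hv⟩ h) v = h := by
        rw [PhyloTree.gsum, leavesBelow_leaf T hv]
        exact (Finset.sum_singleton _ _).trans (Function.update_self _ _ _)
      refine ⟨Function.update g ⟨v, hv⟩ h, ?_, hg'v, ?_⟩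
      · intro l hl
        apply Function.update_of_ne
        intro hlv
        apply hl
        rw [hlv]
        exact desc_refl T v
      · intro e' he'
        have he'v : e' = v := desc_of_leaf T hv he'
        subst he'v
        rw [hg'v]
        exact hh
    · -- interior case
      have hIHc : ∀ c ∈ children T v, (descSet T c).card ≤ n := by
        intro c hc
        have := Finset.card_lt_card (descSet_ssubset T hc)
        omega
      -- obtain new target sums for the children
      have hkpos : 0 < (children T v).card :=
        Finset.card_pos.mpr (children_nonempty T hv)
      obtain ⟨hc, hclab, hcsum⟩ :
          ∃ hc : T.V → G, (∀ c ∈ children T v, L (hc c) = L (T.gsum g c)) ∧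
            ∑ c ∈ children T v, hc c = h := by
        rcases eq_or_lt_of_le (show 1 ≤ (children T v).card from hkpos) with h1 | h2
        · -- exactly one child
          obtain ⟨c, hcs⟩ := Finset.card_eq_one.mp h1.symm
          refine ⟨fun _ => h, ?_, ?_⟩
          · intro c' hc'
            rw [hcs, Finset.mem_singleton] at hc'
            subst hc'
            rw [hh, gsum_eq_sum_children T g hv, hcs, Finset.sum_singleton]
          · rw [hcs, Finset.sum_singleton]
        · exact exists_new_child_sums T L hL g hv h2 h hh
      -- fold over the children, fixing each subtree in turn
      have fold : ∀ s : Finset T.V, s ⊆ children T v →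
          ∃ g'' : T.Leaf → G,
            (∀ l : T.Leaf, (∀ c ∈ s, ¬ T.Desc l.1 c) → g'' l = g l) ∧
            (∀ c ∈ s, T.gsum g'' c = hc c) ∧
            (∀ c ∈ s, ∀ e' : T.V, T.Desc e' c →
              L (T.gsum g'' e') = L (T.gsum g e')) := by
        intro s
        induction s using Finset.induction_on with
        | empty =>
          intro _
          exact ⟨g, fun l _ => rfl, by simp, by simp⟩
        | @insert a s ha ih =>
          intro hsub
          obtain ⟨g₁, H1unch, H1sum, H1lab⟩ := ih (Finset.Subset.trans
            (Finset.subset_insert a s) hsub)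
          have ha' : a ∈ children T v := hsub (Finset.mem_insert_self a s)
          have hnotbelow : ∀ l : T.Leaf, T.Desc l.1 a → ∀ c ∈ s, ¬ T.Desc l.1 c := by
            intro l hla c hcs hlc
            exact ha (child_eq_of_desc T ha' (hsub (Finset.mem_insert_of_mem hcs))
              hla hlc ▸ hcs)
          have hg1a : T.gsum g₁ a = T.gsum g a := by
            apply gsum_congr
            intro l hl
            exact H1unch l (hnotbelow l hl)
          obtain ⟨g₂, H2unch, H2sum, H2lab⟩ := IH a (hIHc a ha') g₁ (hc a)
            (by rw [hg1a]; exact hclab a ha')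
          have hbelow_a_eq : ∀ e' : T.V, T.Desc e' a → T.gsum g₁ e' = T.gsum g e' := by
            intro e' he'
            apply gsum_congr
            intro l hl
            exact H1unch l (hnotbelow l (desc_trans T hl he'))
          have hbelow_s_eq : ∀ c ∈ s, ∀ e' : T.V, T.Desc e' c →
              T.gsum g₂ e' = T.gsum g₁ e' := by
            intro c hcs e' he'
            apply gsum_congr
            intro l hl
            apply H2unch
            intro hla
            exact hnotbelow l hla c hcs (desc_trans T hl he')
          refine ⟨g₂, ?_, ?_, ?_⟩
          · intro l hl
            rw [H2unch l (hl a (Finset.mem_insert_self a s)),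
              H1unch l fun c hcs => hl c (Finset.mem_insert_of_mem hcs)]
          · intro c hcs
            rcases Finset.mem_insert.mp hcs with rfl | hcs'
            · exact H2sum
            · rw [hbelow_s_eq c hcs' c (desc_refl T c)]
              exact H1sum c hcs'
          · intro c hcs e' he'
            rcases Finset.mem_insert.mp hcs with rfl | hcs'
            · rw [H2lab e' he', hbelow_a_eq e' he']
            · rw [hbelow_s_eq c hcs' e' he']
              exact H1lab c hcs' e' he'
      obtain ⟨g'', Hunch, Hsum, Hlab⟩ := fold (children T v) (Finset.Subset.refl _)
      have hg''v : T.gsum g'' v = h := by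
        rw [gsum_eq_sum_children T g'' hv, Finset.sum_congr rfl Hsum, hcsum]
      refine ⟨g'', ?_, hg''v, ?_⟩
      · intro l hl
        apply Hunch
        intro c hcs hlc
        exact hl (desc_trans T hlc (desc_of_child T hcs))
      · intro e' he'
        by_cases he'v : e' = v
        · subst he'v
          rw [hg''v]
          exact hh
        · obtain ⟨c, hcs, he'c⟩ := child_of_desc T he'v he'
          exact Hlab c hcs e' he'c

end PhyloGlueAux

end Aux

/-- **Lemma (gluing of consistent labelings).** For a friendly labeling `L` and an interior
edge `e` of `T`, consistent labelings of `T_{e,-}` and `T_{e,+}` agreeing on `e` glue to a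
consistent labeling of `T`. -/
theorem glue_consistent (T : PhyloTree) {G 𝓛 : Type} [AddCommGroup G] [Fintype G]
    (L : G → 𝓛) (hL : Friendly L) (e : T.V) (he : T.InteriorEdge e)
    (lm : ↥(T.Eminus e) → 𝓛) (hlm : lm ∈ T.consLab L (T.Eminus e))
    (lp : ↥(T.Eplus e) → 𝓛) (hlp : lp ∈ T.consLab L (T.Eplus e))
    (hagree : lm ⟨e, T.mem_Eminus_self e⟩ = lp ⟨e, T.mem_Eplus_self e⟩) :
    T.glue e lm lp ∈ T.consLabFull L := by
  classical
  open PhyloGlueAux in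
  obtain ⟨gm, hgm⟩ := hlm
  obtain ⟨gp, hgp⟩ := hlp
  have hlm_eq : ∀ e' : T.V, ∀ h : T.Desc e' e, lm ⟨e', h⟩ = L (T.gsum gm e') := by
    intro e' h
    exact (congrFun hgm ⟨e', h⟩).symm
  have hlp_eq : ∀ e' : T.V, ∀ h : e' ∈ T.Eplus e, lp ⟨e', h⟩ = L (T.gsum gp e') := by
    intro e' h
    exact (congrFun hgp ⟨e', h⟩).symm
  have hagree' : L (T.gsum gp e) = L (T.gsum gm e) := by
    rw [← hlm_eq e (T.mem_Eminus_self e), ← hlp_eq e (T.mem_Eplus_self e), hagree]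
  obtain ⟨g', hunch, hsum, hlab⟩ := exchange T L hL (descSet T e).card e le_rfl gm
    (T.gsum gp e) hagree'
  set g : T.Leaf → G := fun l => if T.Desc l.1 e then g' l else gp l with hgdef
  refine ⟨g, ?_⟩
  funext e'
  simp only [PhyloTree.glue]
  by_cases h : T.Desc e' e
  · rw [dif_pos h]
    have hge' : T.gsum g e' = T.gsum g' e' := by
      apply gsum_congr
      intro l hl
      simp only [hgdef, if_pos (desc_trans T hl h)]
    rw [hge', hlab e' h, hlm_eq e' h]
  · rw [dif_neg h]
    have hge' : T.gsum g e' = T.gsum gp e' := by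
      rw [PhyloTree.gsum, PhyloTree.gsum,
        ← Finset.sum_filter_add_sum_filter_not (T.leavesBelow e')
          (fun l => T.Desc l.1 e) (fun l => g l),
        ← Finset.sum_filter_add_sum_filter_not (T.leavesBelow e')
          (fun l => T.Desc l.1 e) (fun l => gp l)]
      have h2 : ∑ l ∈ (T.leavesBelow e').filter (fun l => ¬ T.Desc l.1 e), g l =
          ∑ l ∈ (T.leavesBelow e').filter (fun l => ¬ T.Desc l.1 e), gp l := by
        apply Finset.sum_congr rfl
        intro l hl
        rw [Finset.mem_filter] at hl
        simp only [hgdef, if_neg hl.2]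
      rw [h2]
      congr 1
      by_cases hee' : T.Desc e e'
      · have hfe : (T.leavesBelow e').filter (fun l => T.Desc l.1 e) = T.leavesBelow e := by
          ext l
          simp only [Finset.mem_filter, mem_leavesBelow]
          constructor
          · exact fun hl => hl.2
          · exact fun hl => ⟨desc_trans T hl hee', hl⟩
        rw [hfe]
        have hg_on : ∑ l ∈ T.leavesBelow e, g l = T.gsum g' e := by
          apply Finset.sum_congr rfl
          intro l hl
          rw [mem_leavesBelow] at hl
          simp only [hgdef, if_pos hl]
        rw [hg_on, hsum]
        rfl
      · have hfe : (T.leavesBelow e').filter (fun l => T.Desc l.1 e) = ∅ := by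
          apply Finset.filter_eq_empty_iff.mpr
          intro l hl
          rw [mem_leavesBelow] at hl
          intro hle
          rcases desc_comparable T hle hl with hc | hc
          · exact hee' hc
          · exact h hc
        rw [hfe]
        simp
    rw [hge', hlp_eq e' (Or.inr h)]
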